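/- Let 𝓛 be the asymptotic filtered colimit of {(X_s,𝓛_s)}_{s∈S} on X, let Y be a metric space, and let f : X → Y. Then f is slowly oscillating with respect to 𝓛 if and only if for every s ∈ S the restriction f|_{X_s} is slowly oscillating with respect to 𝓛_s. -/

import Mathlib

open Set

/-- The star of a set `V` against a family `U`: the union of all members of `U` meeting `V`. -/
def lsStar {X : Type*} (V : Set X) (U : Set (Set X)) : Set X :=
  ⋃₀ {u ∈ U | (u ∩ V).Nonempty}

/-- The family `st(𝓥,𝓤) = {st(V,𝓤) : V ∈ 𝓥}`. -/
def lsStarFam {X : Type*} (V U : Set (Set X)) : Set (Set X) :=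
  (fun v => lsStar v U) '' V

/-- A large scale structure on the subset `A` of `X`: a nonempty collection of families of
subsets of `A` closed under (1) replacing a family by any family whose members with more than
one point refine it, and (2) stars. -/
structure IsLSS {X : Type*} (A : Set X) (L : Set (Set (Set X))) : Prop where
  nonempty : L.Nonempty
  mem_sub : ∀ U ∈ L, ∀ u ∈ U, u ⊆ A
  refine : ∀ V ∈ L, ∀ U : Set (Set X), (∀ u ∈ U, u ⊆ A) →
    (∀ u ∈ U, u.Nontrivial → ∃ v ∈ V, u ⊆ v) → U ∈ L
  star_mem : ∀ U ∈ L, ∀ V ∈ L, lsStarFam V U ∈ L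

/-- The data for an asymptotic filtered colimit: subsets `Xs s` of `X` covering `X`, each with a
large scale structure `L s`, whose restrictions to pairwise intersections coincide, and which are
directed. -/
structure AFCSetup (X S : Type*) where
  Xs : S → Set X
  L : S → Set (Set (Set X))
  lss : ∀ s, IsLSS (Xs s) (L s)
  covers : ⋃ s, Xs s = Set.univ
  compat : ∀ r s : S, ∀ U : Set (Set X), (∀ u ∈ U, u ⊆ Xs r ∩ Xs s) → (U ∈ L r ↔ U ∈ L s)
  directed : ∀ r s : S, ∃ t, Xs r ∪ Xs s ⊆ Xs t

/-- The asymptotic filtered colimit: `𝓤` is uniformly bounded iff there are `s ∈ S` and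
`𝓥 ∈ 𝓛_s` such that every member of `𝓤` with more than one point is contained in a member
of `𝓥`. -/
def AFCSetup.colim {X S : Type*} (C : AFCSetup X S) : Set (Set (Set X)) :=
  {U | ∃ s, ∃ V ∈ C.L s, ∀ u ∈ U, u.Nontrivial → ∃ v ∈ V, u ⊆ v}

/-- `x` and `y` are connected by a finite chain `U_1, …, U_n` of members of `𝓤` with
consecutive members intersecting, `x ∈ U_1` and `y ∈ U_n`. -/
def chainConnected {X : Type*} (U : Set (Set X)) (x y : X) : Prop :=
  ∃ n : ℕ, ∃ c : Fin (n + 1) → Set X, (∀ i, c i ∈ U) ∧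
    (∀ i : Fin n, (c i.castSucc ∩ c i.succ).Nonempty) ∧ x ∈ c 0 ∧ y ∈ c (Fin.last n)

/-- The coarse chain component of `x`: the union of its `𝓤`-chain components over all
uniformly bounded families `𝓤 ∈ L`. -/
def coarseComponent {X : Type*} (L : Set (Set (Set X))) (x : X) : Set X :=
  {y | ∃ U ∈ L, chainConnected U x y}

/-- `B` is weakly bounded: its intersection with each coarse chain component is contained in a
member of some uniformly bounded family. -/
def WeaklyBounded {X : Type*} (L : Set (Set (Set X))) (B : Set X) : Prop :=
  ∀ x : X, ∃ U ∈ L, ∃ u ∈ U, B ∩ coarseComponent L x ⊆ u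

/-- `f` is slowly oscillating on the space `A` with large scale structure `L`: for every
`𝓤 ∈ L` and `ε > 0` there is a weakly bounded `B ⊆ A` such that every `U ∈ 𝓤` not contained
in `B` has `diam f(U) < ε`. -/
def SlowlyOscillating {X Y : Type*} [MetricSpace Y] (A : Set X) (L : Set (Set (Set X)))
    (f : X → Y) : Prop :=
  ∀ U ∈ L, ∀ ε : ℝ, 0 < ε → ∃ B ⊆ A, WeaklyBounded L B ∧
    ∀ u ∈ U, ¬u ⊆ B → EMetric.diam (f '' u) < ENNReal.ofReal ε

section Aux

variable {X S : Type*}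

/-- One-step relation: `a` and `b` both lie in a common member of `U`. -/
def lsRel (U : Set (Set X)) (a b : X) : Prop := ∃ u ∈ U, a ∈ u ∧ b ∈ u

lemma lsRel_symm {U : Set (Set X)} {a b : X} (h : lsRel U a b) : lsRel U b a := by
  obtain ⟨u, hu, ha, hb⟩ := h; exact ⟨u, hu, hb, ha⟩

lemma transGen_lsRel_symm {U : Set (Set X)} {a b : X}
    (h : Relation.TransGen (lsRel U) a b) : Relation.TransGen (lsRel U) b a := by
  induction h with
  | single h => exact Relation.TransGen.single (lsRel_symm h)
  | tail h₁ h₂ ih => exact (Relation.TransGen.single (lsRel_symm h₂)).trans ih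

lemma chainConnected_iff_transGen {U : Set (Set X)} {x y : X} :
    chainConnected U x y ↔ Relation.TransGen (lsRel U) x y := by
  constructor
  · rintro ⟨n, c, hc, hcap, hx, hy⟩
    induction n generalizing y with
    | zero => exact Relation.TransGen.single ⟨c 0, hc 0, hx, hy⟩
    | succ n ih =>
      obtain ⟨p, hp1, hp2⟩ := hcap (Fin.last n)
      have hmid : Relation.TransGen (lsRel U) x p := by
        refine ih (c ∘ Fin.castSucc) (fun i => hc _) ?_ ?_ ?_
        · intro i
          have := hcap i.castSucc
          rw [Fin.succ_castSucc] at this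
          exact this
        · simpa using hx
        · simpa using hp1
      refine hmid.tail ⟨c (Fin.last (n+1)), hc _, ?_, hy⟩
      rwa [Fin.succ_last] at hp2
  · intro h
    induction h with
    | single h =>
      obtain ⟨u, hu, ha, hb⟩ := h
      exact ⟨0, fun _ => u, fun _ => hu, fun i => i.elim0, ha, hb⟩
    | tail h₁ h₂ ih =>
      obtain ⟨u, hu, hb, hy⟩ := h₂
      obtain ⟨n, c, hc, hcap, hx, hbc⟩ := ih
      refine ⟨n + 1, Fin.snoc c u, ?_, ?_, ?_, ?_⟩
      · intro i
        refine Fin.lastCases ?_ ?_ i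
        · simpa using hu
        · intro j; simpa using hc j
      · intro i
        refine Fin.lastCases ?_ ?_ i
        · simp only [Fin.snoc_castSucc, Fin.succ_last, Fin.snoc_last]
          exact ⟨_, hbc, hb⟩
        · intro j
          simp only [Fin.succ_castSucc, Fin.snoc_castSucc]
          exact hcap j
      · have h0 : (0 : Fin (n + 2)) = (0 : Fin (n + 1)).castSucc := rfl
        rw [h0, Fin.snoc_castSucc]
        exact hx
      · simpa using hy

/-- Families all of whose members are subsingletons contained in `A` are uniformly bounded. -/
lemma IsLSS.subsingleton_mem {A : Set X} {L : Set (Set (Set X))} (h : IsLSS A L)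
    {U : Set (Set X)} (hsub : ∀ u ∈ U, u ⊆ A) (hss : ∀ u ∈ U, u.Subsingleton) : U ∈ L := by
  obtain ⟨V, hV⟩ := h.nonempty
  exact h.refine V hV U hsub (fun u hu hnt => ((hnt.not_subsingleton) (hss u hu)).elim)

/-- A large scale structure is closed under binary unions. -/
lemma IsLSS.union_mem {A : Set X} {L : Set (Set (Set X))} (h : IsLSS A L)
    {U₁ U₂ : Set (Set X)} (h₁ : U₁ ∈ L) (h₂ : U₂ ∈ L) : U₁ ∪ U₂ ∈ L := by
  set Sg : Set (Set X) := {u | u ⊆ A ∧ u.Subsingleton} with hSgdef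
  have hSg : Sg ∈ L := h.subsingleton_mem (fun u hu => hu.1) (fun u hu => hu.2)
  have hU₂' : U₂ ∪ Sg ∈ L := by
    refine h.refine U₂ h₂ _ ?_ ?_
    · rintro u (hu | hu)
      · exact h.mem_sub U₂ h₂ u hu
      · exact hu.1
    · rintro u (hu | hu) hnt
      · exact ⟨u, hu, subset_rfl⟩
      · exact (hnt.not_subsingleton hu.2).elim
  have hW₁ : lsStarFam U₁ (U₂ ∪ Sg) ∈ L := h.star_mem _ hU₂' _ h₁
  have hW₁sub : ∀ u ∈ lsStarFam U₁ (U₂ ∪ Sg), u ⊆ A := h.mem_sub _ hW₁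
  have hW₁' : lsStarFam U₁ (U₂ ∪ Sg) ∪ Sg ∈ L := by
    refine h.refine _ hW₁ _ ?_ ?_
    · rintro u (hu | hu)
      · exact hW₁sub u hu
      · exact hu.1
    · rintro u (hu | hu) hnt
      · exact ⟨u, hu, subset_rfl⟩
      · exact (hnt.not_subsingleton hu.2).elim
  have hW : lsStarFam (U₂ ∪ Sg) (lsStarFam U₁ (U₂ ∪ Sg) ∪ Sg) ∈ L := h.star_mem _ hW₁' _ hU₂'
  refine h.refine _ hW _ ?_ ?_
  · rintro u (hu | hu)
    · exact h.mem_sub U₁ h₁ u hu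
    · exact h.mem_sub U₂ h₂ u hu
  · rintro u (hu | hu) hnt
    · -- u ∈ U₁
      obtain ⟨p, hp⟩ := hnt.nonempty
      have hpA : p ∈ A := h.mem_sub U₁ h₁ u hu hp
      have hum : u ⊆ lsStar u (U₂ ∪ Sg) := by
        intro q hq
        exact ⟨{q}, ⟨Or.inr ⟨singleton_subset_iff.2 (h.mem_sub U₁ h₁ u hu hq),
          subsingleton_singleton⟩, ⟨q, rfl, hq⟩⟩, rfl⟩
      refine ⟨lsStar {p} (lsStarFam U₁ (U₂ ∪ Sg) ∪ Sg), ?_, ?_⟩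
      · exact ⟨{p}, Or.inr ⟨singleton_subset_iff.2 hpA, subsingleton_singleton⟩, rfl⟩
      · intro q hq
        refine mem_sUnion.2 ⟨lsStar u (U₂ ∪ Sg), ⟨Or.inl ⟨u, hu, rfl⟩, ⟨p, hum hp, rfl⟩⟩,
          hum hq⟩
    · -- u ∈ U₂
      refine ⟨lsStar u (lsStarFam U₁ (U₂ ∪ Sg) ∪ Sg), ⟨u, Or.inl hu, rfl⟩, ?_⟩
      intro q hq
      exact mem_sUnion.2 ⟨{q}, ⟨Or.inr ⟨singleton_subset_iff.2 (h.mem_sub U₂ h₂ u hu hq),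
        subsingleton_singleton⟩, ⟨q, rfl, hq⟩⟩, rfl⟩

/-- If `y` and `z` are chain connected over a uniformly bounded family, then the pair
`{y, z}` is uniformly bounded. -/
lemma IsLSS.pair_mem {A : Set X} {L : Set (Set (Set X))} (h : IsLSS A L)
    {U : Set (Set X)} (hU : U ∈ L) {y z : X} (hyz : Relation.TransGen (lsRel U) y z) :
    ({({y, z} : Set X)} : Set (Set X)) ∈ L := by
  induction hyz with
  | single hr =>
    obtain ⟨u, hu, hy, hz⟩ := hr
    refine h.refine U hU _ ?_ ?_
    · intro w hw
      rw [mem_singleton_iff] at hw; subst hw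
      intro q hq
      rcases hq with hq | hq <;> subst hq
      · exact h.mem_sub U hU u hu hy
      · exact h.mem_sub U hU u hu hz
    · intro w hw _
      rw [mem_singleton_iff] at hw; subst hw
      exact ⟨u, hu, by rintro q (rfl | rfl) <;> assumption⟩
  | @tail b c hxb hr ih =>
    obtain ⟨u, hu, hb, hc⟩ := hr
    have h2 : ({({b, c} : Set X)} : Set (Set X)) ∈ L := by
      refine h.refine U hU _ ?_ ?_
      · intro w hw
        rw [mem_singleton_iff] at hw; subst hw
        rintro q (rfl | rfl)
        · exact h.mem_sub U hU u hu hb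
        · exact h.mem_sub U hU u hu hc
      · intro w hw _
        rw [mem_singleton_iff] at hw; subst hw
        exact ⟨u, hu, by rintro q (rfl | rfl) <;> assumption⟩
    have hP : ({({y, b} : Set X)} : Set (Set X)) ∪ {({b, c} : Set X)} ∈ L := h.union_mem ih h2
    have hW : lsStarFam {({y, b} : Set X)} (({({y, b} : Set X)} : Set (Set X)) ∪
        {({b, c} : Set X)}) ∈ L := h.star_mem _ hP _ ih
    refine h.refine _ hW _ ?_ ?_
    · intro w hw
      rw [mem_singleton_iff] at hw; subst hw
      rintro q (rfl | rfl)
      · exact h.mem_sub _ ih {q, b} rfl (Or.inl rfl)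
      · exact h.mem_sub _ h2 {b, q} rfl (Or.inr rfl)
    · intro w hw _
      rw [mem_singleton_iff] at hw; subst hw
      refine ⟨lsStar {y, b} (({({y, b} : Set X)} : Set (Set X)) ∪ {({b, c} : Set X)}),
        ⟨{y, b}, rfl, rfl⟩, ?_⟩
      rintro q (rfl | rfl)
      · exact mem_sUnion.2 ⟨{q, b}, ⟨Or.inl rfl, ⟨q, Or.inl rfl, Or.inl rfl⟩⟩, Or.inl rfl⟩
      · exact mem_sUnion.2 ⟨{b, q}, ⟨Or.inr rfl, ⟨b, Or.inl rfl, Or.inr rfl⟩⟩, Or.inr rfl⟩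

variable (C : AFCSetup X S)

lemma AFCSetup.mem_mono {s t : S} (hst : C.Xs s ⊆ C.Xs t) {U : Set (Set X)}
    (hU : U ∈ C.L s) : U ∈ C.L t :=
  (C.compat s t U (fun u hu => subset_inter ((C.lss s).mem_sub U hU u hu)
    (((C.lss s).mem_sub U hU u hu).trans hst))).mp hU

lemma AFCSetup.mem_colim_of_mem {s : S} {U : Set (Set X)} (hU : U ∈ C.L s) : U ∈ C.colim :=
  ⟨s, U, hU, fun u hu _ => ⟨u, hu, subset_rfl⟩⟩

lemma AFCSetup.colim_union {U₁ U₂ : Set (Set X)} (h₁ : U₁ ∈ C.colim) (h₂ : U₂ ∈ C.colim) :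
    U₁ ∪ U₂ ∈ C.colim := by
  obtain ⟨t₁, V₁, hV₁, hr₁⟩ := h₁
  obtain ⟨t₂, V₂, hV₂, hr₂⟩ := h₂
  obtain ⟨r, hr⟩ := C.directed t₁ t₂
  have hV₁r : V₁ ∈ C.L r := C.mem_mono (subset_union_left.trans hr) hV₁
  have hV₂r : V₂ ∈ C.L r := C.mem_mono (subset_union_right.trans hr) hV₂
  refine ⟨r, V₁ ∪ V₂, (C.lss r).union_mem hV₁r hV₂r, ?_⟩
  rintro u (hu | hu) hnt
  · obtain ⟨v, hv, huv⟩ := hr₁ u hu hnt; exact ⟨v, Or.inl hv, huv⟩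
  · obtain ⟨v, hv, huv⟩ := hr₂ u hu hnt; exact ⟨v, Or.inr hv, huv⟩

/-- Key lemma: two points of `Xs s` chain-connected over a family of the colimit have their
pair uniformly bounded already in `L s`. -/
lemma AFCSetup.pair_mem_of_colim {s : S} {y z : X} (hy : y ∈ C.Xs s) (hz : z ∈ C.Xs s)
    {U : Set (Set X)} (hU : U ∈ C.colim) (h : Relation.TransGen (lsRel U) y z) :
    ({({y, z} : Set X)} : Set (Set X)) ∈ C.L s := by
  obtain ⟨t, V, hV, hr⟩ := hU
  obtain ⟨r, hrr⟩ := C.directed s t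
  have hVr : V ∈ C.L r := C.mem_mono (subset_union_right.trans hrr) hV
  have hstep : ∀ a b : X, lsRel U a b → Relation.ReflTransGen (lsRel V) a b := by
    intro a b ⟨u, hu, ha, hb⟩
    by_cases hab : a = b
    · subst hab; exact Relation.ReflTransGen.refl
    · obtain ⟨v, hv, huv⟩ := hr u hu ⟨a, ha, b, hb, hab⟩
      exact Relation.ReflTransGen.single ⟨v, hv, huv ha, huv hb⟩
  have hrt : Relation.ReflTransGen (lsRel V) y z := by
    clear hy hz
    induction h with
    | single h => exact hstep _ _ h
    | tail h₁ h₂ ih => exact ih.trans (hstep _ _ h₂)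
  rcases Relation.reflTransGen_iff_eq_or_transGen.mp hrt with rfl | htg
  · exact (C.lss s).subsingleton_mem
      (by rintro w rfl; rintro q (rfl | rfl) <;> exact hy)
      (by rintro w rfl; simp)
  · have hpr : ({({y, z} : Set X)} : Set (Set X)) ∈ C.L r := (C.lss r).pair_mem hVr htg
    refine (C.compat r s _ ?_).mp hpr
    rintro w rfl
    rintro q (rfl | rfl)
    · exact ⟨hrr (Or.inl hy), hy⟩
    · exact ⟨hrr (Or.inl hz), hz⟩

lemma AFCSetup.weaklyBounded_colim {s : S} {B : Set X} (hB : B ⊆ C.Xs s)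
    (hwb : WeaklyBounded (C.L s) B) : WeaklyBounded C.colim B := by
  intro x
  by_cases hne : (B ∩ coarseComponent C.colim x).Nonempty
  · obtain ⟨b₀, hb₀B, hb₀c⟩ := hne
    obtain ⟨W, hW, w, hwW, hsub⟩ := hwb b₀
    refine ⟨W, C.mem_colim_of_mem hW, w, hwW, ?_⟩
    rintro y ⟨hyB, hyc⟩
    refine hsub ⟨hyB, ?_⟩
    obtain ⟨U₁, hU₁, hc₁⟩ := hb₀c
    obtain ⟨U₂, hU₂, hc₂⟩ := hyc
    rw [chainConnected_iff_transGen] at hc₁ hc₂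
    have hUu : U₁ ∪ U₂ ∈ C.colim := C.colim_union hU₁ hU₂
    have htg : Relation.TransGen (lsRel (U₁ ∪ U₂)) b₀ y :=
      (Relation.TransGen.mono (p := lsRel (U₁ ∪ U₂)) (fun a b ⟨u, hu, h⟩ => ⟨u, Or.inl hu, h⟩) _ _ (transGen_lsRel_symm hc₁)).trans
        (Relation.TransGen.mono (p := lsRel (U₁ ∪ U₂)) (fun a b ⟨u, hu, h⟩ => ⟨u, Or.inr hu, h⟩) _ _ hc₂)
    have hpair : ({({b₀, y} : Set X)} : Set (Set X)) ∈ C.L s :=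
      C.pair_mem_of_colim (hB hb₀B) (hB hyB) hUu htg
    exact ⟨{({b₀, y} : Set X)}, hpair, chainConnected_iff_transGen.mpr
      (Relation.TransGen.single ⟨{b₀, y}, rfl, Or.inl rfl, Or.inr rfl⟩)⟩
  · refine ⟨{(∅ : Set X)}, C.mem_colim_of_mem ((C.lss s).subsingleton_mem
      (by rintro u rfl; exact empty_subset _) (by rintro u rfl; exact subsingleton_empty)),
      ∅, rfl, ?_⟩
    intro y hy
    exact absurd ⟨y, hy⟩ hne

lemma AFCSetup.weaklyBounded_restrict {s : S} {B : Set X}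
    (hwb : WeaklyBounded C.colim B) : WeaklyBounded (C.L s) (B ∩ C.Xs s) := by
  intro x
  obtain ⟨U, hU, u, huU, hsub⟩ := hwb x
  obtain ⟨t, V, hV, hr⟩ := hU
  have hcc : coarseComponent (C.L s) x ⊆ coarseComponent C.colim x := by
    rintro y ⟨W, hW, hc⟩
    exact ⟨W, C.mem_colim_of_mem hW, hc⟩
  by_cases hnt : u.Nontrivial
  · obtain ⟨v, hv, huv⟩ := hr u huU hnt
    obtain ⟨r, hrr⟩ := C.directed s t
    have hVr : V ∈ C.L r := C.mem_mono (subset_union_right.trans hrr) hV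
    have hvXt : v ⊆ C.Xs t := (C.lss t).mem_sub V hV v hv
    have h1 : ({v ∩ C.Xs s} : Set (Set X)) ∈ C.L r := by
      refine (C.lss r).refine V hVr _ ?_ ?_
      · rintro w rfl
        exact inter_subset_left.trans (hvXt.trans (subset_union_right.trans hrr))
      · rintro w rfl _
        exact ⟨v, hv, inter_subset_left⟩
    have h2 : ({v ∩ C.Xs s} : Set (Set X)) ∈ C.L s := by
      refine (C.compat r s _ ?_).mp h1
      rintro w rfl
      exact subset_inter (inter_subset_left.trans (hvXt.trans
        (subset_union_right.trans hrr))) inter_subset_right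
    refine ⟨_, h2, v ∩ C.Xs s, rfl, ?_⟩
    rintro y ⟨⟨hyB, hyX⟩, hyc⟩
    exact ⟨huv (hsub ⟨hyB, hcc hyc⟩), hyX⟩
  · have hss : u.Subsingleton := not_nontrivial_iff.mp hnt
    refine ⟨{u ∩ C.Xs s}, (C.lss s).subsingleton_mem
      (by rintro w rfl; exact inter_subset_right)
      (by rintro w rfl; exact hss.anti inter_subset_left), u ∩ C.Xs s, rfl, ?_⟩
    rintro y ⟨⟨hyB, hyX⟩, hyc⟩
    exact ⟨hsub ⟨hyB, hcc hyc⟩, hyX⟩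

end Aux

/-- `f` is slowly oscillating on the asymptotic filtered colimit iff each
restriction `f|_{X_s}` is slowly oscillating on `(X_s, 𝓛_s)`. -/
theorem stmt3 {X S Y : Type*} [MetricSpace Y] (C : AFCSetup X S) (f : X → Y) :
    SlowlyOscillating (Set.univ : Set X) C.colim f ↔
      ∀ s, SlowlyOscillating (C.Xs s) (C.L s) f := by
  constructor
  · intro h s U hU ε hε
    obtain ⟨B, _, hwb, hd⟩ := h U (C.mem_colim_of_mem hU) ε hε
    refine ⟨B ∩ C.Xs s, inter_subset_right, C.weaklyBounded_restrict hwb, ?_⟩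
    intro u hu hnsub
    refine hd u hu ?_
    intro hsubB
    exact hnsub (subset_inter hsubB ((C.lss s).mem_sub U hU u hu))
  · intro h U hU ε hε
    obtain ⟨s, V, hV, hr⟩ := hU
    obtain ⟨B, hBsub, hwb, hd⟩ := h s V hV ε hε
    refine ⟨B, subset_univ _, C.weaklyBounded_colim hBsub hwb, ?_⟩
    intro u hu hnsub
    by_cases hnt : u.Nontrivial
    · obtain ⟨v, hv, huv⟩ := hr u hu hnt
      have hvd : EMetric.diam (f '' v) < ENNReal.ofReal ε := by
        refine hd v hv ?_
        intro hvB
        exact hnsub (huv.trans hvB)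
      exact lt_of_le_of_lt (EMetric.diam_mono (image_mono (f := f) huv)) hvd
    · have : (f '' u).Subsingleton := (not_nontrivial_iff.mp hnt).image f
      rw [show EMetric.diam (f '' u) = 0 from EMetric.diam_subsingleton this]
      exact ENNReal.ofReal_pos.mpr hε
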